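/- Let L be a nilpotent 1-shifted curved Lie superalgebra and let y, z be odd elements of L^{−1} such that ad(z) ad(y)ⁿ z = 0 for all n ≥ 0. Then the Baker–Campbell–Hausdorff composition satisfies y ∗ z = y + (ad(y)/(1 − e^{−ad(y)})) z. -/

import Mathlib

noncomputable section

/-- The sign `(-1)^p` associated to a parity `p ∈ ℤ/2`. -/
def sgn (p : ZMod 2) : ℚ := if p = 0 then 1 else -1

/-- A 1-shifted curved Lie superalgebra over `ℚ`:
a `ℤ × ℤ/2`-graded superspace (`comp k p` is the component of ghost number `k`
and parity `p`), equipped with an odd curvature `R ∈ L¹`, an odd differential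
`d : Lᵏ → Lᵏ⁺¹` and an odd antibracket `(-,-) : Lᵏ × Lˡ → L^{k+l+1}`, satisfying
the Bianchi identity, the curvature identity, the Leibniz identity, antisymmetry
and the Jacobi rule. -/
structure CurvedLS where
  V : Type
  [grp : AddCommGroup V]
  [mod : Module ℚ V]
  comp : ℤ → ZMod 2 → Submodule ℚ V
  R : V
  R_mem : R ∈ comp 1 1
  d : V →ₗ[ℚ] V
  d_mem : ∀ (k : ℤ) (p : ZMod 2) (x : V), x ∈ comp k p → d x ∈ comp (k + 1) (p + 1)
  br : V →ₗ[ℚ] V →ₗ[ℚ] V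
  br_mem : ∀ (k l : ℤ) (p q : ZMod 2) (x y : V), x ∈ comp k p → y ∈ comp l q →
    br x y ∈ comp (k + l + 1) (p + q + 1)
  bianchi : d R = 0
  curvId : ∀ x : V, d (d x) = br R x
  leibniz : ∀ (p : ZMod 2) (x y : V), x ∈ (⨆ k : ℤ, comp k p) →
    d (br x y) = br (d x) y + (- sgn p) • br x (d y)
  antisym : ∀ (p q : ZMod 2) (x y : V), x ∈ (⨆ k : ℤ, comp k p) → y ∈ (⨆ k : ℤ, comp k q) →
    br y x = (- sgn ((p + 1) * (q + 1))) • br x y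
  jacobi : ∀ (p : ZMod 2) (x y z : V), x ∈ (⨆ k : ℤ, comp k p) →
    br x (br y z) = br (br x y) z + (- sgn p) • br y (br x z)

attribute [instance] CurvedLS.grp CurvedLS.mod

namespace CurvedLS

variable (L : CurvedLS)

/-- The submodule of elements of parity `p` (of arbitrary ghost number). -/
def P (p : ZMod 2) : Submodule ℚ L.V := ⨆ k : ℤ, L.comp k p

/-- The adjoint operator `ad x = (x, -)`. -/
def ad (x : L.V) : Module.End ℚ L.V := L.br x

/-- A Maurer–Cartan element: an even element of ghost number 0 with
`R + dx + ½(x,x) = 0`. -/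
def IsMC (x : L.V) : Prop := x ∈ L.comp 0 0 ∧ L.R + L.d x + (1 / 2 : ℚ) • L.br x x = 0

/-- A curved Lie superalgebra is nilpotent if `ad x` is nilpotent for every odd `x`. -/
def NilpotentCLS : Prop := ∀ x ∈ L.P 1, IsNilpotent (L.ad x)

/-- The exponential `e^{ad y}` (a finite sum when `ad y` is nilpotent). -/
def expAd (y : L.V) : Module.End ℚ L.V := ∑ᶠ n : ℕ, (n.factorial : ℚ)⁻¹ • (L.ad y) ^ n

/-- The gauge action: `x • y = x + Σ_{n≥0} (−ad y)ⁿ(dy + (x,y))/(n+1)!`. -/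
def gauge (x y : L.V) : L.V :=
  x + ∑ᶠ n : ℕ, ((n + 1).factorial : ℚ)⁻¹ • ((-1 : ℚ) ^ n • (((L.ad y) ^ n) (L.d y + L.br x y)))

/-- The operator `ad y / (1 - e^{-ad y}) = Σ_n B'_n (ad y)ⁿ/n!`, where `B'_n`
are the Bernoulli numbers with `B'₁ = 1/2`. -/
def toddOp (y : L.V) : Module.End ℚ L.V :=
  ∑ᶠ n : ℕ, bernoulli' n • ((n.factorial : ℚ)⁻¹ • (L.ad y) ^ n)

end CurvedLS

open Polynomial Finset

namespace BCHAux

set_option linter.unusedSectionVars false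
variable {E : Type} [Ring E] [Algebra ℚ E]

lemma cast_cancel {a b : E} (n : ℕ) (h : a * ((n : E) + 1) = b * ((n : E) + 1)) : a = b := by
  have hcast : ((n : E) + 1) = algebraMap ℚ E ((n : ℚ) + 1) := by
    simp [map_add, map_natCast]
  have hkey : ∀ c : E, c * ((n : E) + 1) * algebraMap ℚ E (((n : ℚ) + 1)⁻¹) = c := by
    intro c
    rw [hcast, mul_assoc, ← map_mul, mul_inv_cancel₀ (by positivity), map_one, mul_one]
  calc a = a * ((n : E) + 1) * algebraMap ℚ E (((n : ℚ) + 1)⁻¹) := (hkey a).symm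
    _ = b * ((n : E) + 1) * algebraMap ℚ E (((n : ℚ) + 1)⁻¹) := by rw [h]
    _ = b := hkey b

lemma deriv_inj {p q : Polynomial E} (h : derivative p = derivative q)
    (h0 : p.coeff 0 = q.coeff 0) : p = q := by
  ext n
  cases n with
  | zero => exact h0
  | succ n =>
    have := congrArg (fun r => Polynomial.coeff r n) h
    simp only [coeff_derivative] at this
    exact cast_cancel n this

lemma ode_uniq {U F G : Polynomial E} (hF : derivative F = U * F) (hG : derivative G = U * G)
    (h0 : F.coeff 0 = G.coeff 0) : F = G := by
  ext n
  induction n using Nat.strong_induction_on with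
  | _ n ih =>
    match n with
    | 0 => exact h0
    | Nat.succ n =>
      apply cast_cancel n
      have hF' := congrArg (fun r => Polynomial.coeff r n) hF
      have hG' := congrArg (fun r => Polynomial.coeff r n) hG
      simp only [coeff_derivative, Polynomial.coeff_mul] at hF' hG'
      rw [hF', hG']
      refine Finset.sum_congr rfl fun p hp => ?_
      rw [Finset.HasAntidiagonal.mem_antidiagonal] at hp
      rw [ih p.2 (by omega)]

/-- Truncated exponential polynomial `Σ_{n<N} tⁿ aⁿ/n!`. -/
def ep (a : E) (N : ℕ) : Polynomial E :=
  ∑ n ∈ Finset.range N, monomial n ((n.factorial : ℚ)⁻¹ • a ^ n)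

lemma ep_coeff_zero (a : E) {N : ℕ} (hN : 0 < N) : (ep a N).coeff 0 = 1 := by
  rw [ep, finset_sum_coeff, Finset.sum_eq_single 0]
  · simp
  · intro b _ hb
    simp [coeff_monomial, hb]
  · intro habs
    exact absurd (Finset.mem_range.2 hN) habs

lemma C_comm_ep {a b : E} (hab : Commute a b) (N : ℕ) : C b * ep a N = ep a N * C b := by
  rw [ep, Finset.sum_mul, Finset.mul_sum]
  refine Finset.sum_congr rfl fun n _ => ?_
  rw [C_mul_monomial, monomial_mul_C]
  congr 1
  rw [mul_smul_comm, smul_mul_assoc, ((hab.pow_left n).symm.eq)]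

lemma mul_natCast_succ_smul (c : ℚ) (b : E) (i : ℕ) :
    (c • b) * ((i : E) + 1) = (((i : ℚ) + 1) * c) • b := by
  have hcast : ((i : E) + 1) = algebraMap ℚ E ((i : ℚ) + 1) := by simp [map_add, map_natCast]
  rw [hcast, ← Algebra.commutes, ← Algebra.smul_def, smul_smul]


lemma ep_derivative {a : E} {N : ℕ} (ha : a ^ N = 0) :
    derivative (ep a N) = C a * ep a N := by
  cases N with
  | zero => simp [ep]
  | succ K =>
    rw [ep, map_sum]
    simp only [derivative_monomial]
    rw [Finset.sum_range_succ']
    have h0 : (monomial (0 - 1) (((Nat.factorial 0 : ℚ)⁻¹ • a ^ 0) * ((0 : ℕ) : E)) : Polynomial E) = 0 := by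
      simp
    rw [h0, add_zero]
    rw [Finset.mul_sum, Finset.sum_range_succ]
    have hlast : C a * monomial K ((K.factorial : ℚ)⁻¹ • a ^ K) = 0 := by
      rw [C_mul_monomial, mul_smul_comm, ← pow_succ', ha, smul_zero, monomial_zero_right]
    rw [hlast, add_zero]
    refine Finset.sum_congr rfl fun i _ => ?_
    rw [C_mul_monomial]
    have hidx : (i + 1) - 1 = i := by omega
    rw [hidx]
    congr 1
    push_cast
    rw [mul_natCast_succ_smul, mul_smul_comm, ← pow_succ']
    congr 1
    rw [Nat.factorial_succ]
    push_cast
    have h1 : (i.factorial : ℚ) ≠ 0 := by positivity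
    field_simp

lemma ep_derivative' {a : E} {N : ℕ} (ha : a ^ N = 0) :
    derivative (ep a N) = ep a N * C a := by
  rw [ep_derivative ha, C_comm_ep (Commute.refl a)]

lemma ep_mul_neg {a : E} {N : ℕ} (hN : 0 < N) (ha : a ^ N = 0) :
    ep a N * ep (-a) N = 1 := by
  have hna : (-a) ^ N = 0 := by rw [neg_pow, ha, mul_zero]
  have hcomm : C (-a) * ep a N = ep a N * C (-a) :=
    C_comm_ep ((Commute.refl a).neg_right) N
  refine deriv_inj ?_ ?_
  · rw [derivative_mul, ep_derivative ha, ep_derivative hna, ← mul_assoc, ← hcomm]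
    rw [derivative_one]
    rw [mul_assoc, mul_assoc, ← add_mul, ← C_add, add_neg_cancel, map_zero, zero_mul]
  · rw [mul_coeff_zero, ep_coeff_zero _ hN, ep_coeff_zero _ hN, one_mul]
    simp

lemma commute_monomial {a b : E} (hab : Commute a b) (i j : ℕ) :
    Commute (monomial i a : Polynomial E) (monomial j b) := by
  unfold Commute SemiconjBy
  rw [monomial_mul_monomial, monomial_mul_monomial, hab.eq, add_comm]

lemma commute_sums_monomial {α β : Type} (s : Finset α) (t : Finset β) (i : α → ℕ) (j : β → ℕ)
    (f : α → E) (g : β → E) (h : ∀ a b, Commute (f a) (g b)) :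
    Commute (∑ a ∈ s, (monomial (i a) (f a) : Polynomial E)) (∑ b ∈ t, monomial (j b) (g b)) :=
  Commute.sum_left _ _ _ fun a _ => Commute.sum_right _ _ _ fun b _ => commute_monomial (h a b) _ _

lemma derivative_pow_comm {p : Polynomial E} (hp : p * derivative p = derivative p * p) (n : ℕ) :
    derivative (p ^ (n + 1)) = ((n : ℚ) + 1) • (derivative p * p ^ n) := by
  induction n with
  | zero => simp
  | succ n ih =>
    rw [pow_succ' p (n + 1), derivative_mul, ih, mul_smul_comm, ← mul_assoc, hp, mul_assoc,
      ← pow_succ']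
    module

lemma isNilpotent_sum' {ι : Type} {s : Finset ι} {f : ι → E}
    (hnil : ∀ i ∈ s, IsNilpotent (f i)) (hcomm : ∀ i ∈ s, ∀ j ∈ s, Commute (f i) (f j)) :
    IsNilpotent (∑ i ∈ s, f i) := by
  classical
  induction s using Finset.induction_on with
  | empty => simp
  | @insert a s ha ih =>
    rw [Finset.sum_insert ha]
    refine Commute.isNilpotent_add ?_ (hnil a (Finset.mem_insert_self a s)) ?_
    · exact Commute.sum_right _ _ _ fun i hi =>
        hcomm a (Finset.mem_insert_self a s) i (Finset.mem_insert_of_mem hi)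
    · exact ih (fun i hi => hnil i (Finset.mem_insert_of_mem hi))
        (fun i hi j hj => hcomm i (Finset.mem_insert_of_mem hi) j (Finset.mem_insert_of_mem hj))

/-- The exponential of a nilpotent element. -/
def expE (a : E) : E := ∑ᶠ n : ℕ, (n.factorial : ℚ)⁻¹ • a ^ n

lemma pow_eq_zero_of_le {a : E} {m n : ℕ} (h : m ≤ n) (ha : a ^ m = 0) : a ^ n = 0 := by
  have : n = m + (n - m) := by omega
  rw [this, pow_add, ha, zero_mul]

lemma expE_eq_sum {a : E} {N : ℕ} (ha : a ^ N = 0) :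
    expE a = ∑ n ∈ range N, (n.factorial : ℚ)⁻¹ • a ^ n := by
  refine finsum_eq_sum_of_support_subset _ fun n hn => ?_
  simp only [Function.mem_support] at hn
  by_contra hmem
  simp only [Finset.coe_range, Set.mem_Iio, not_lt] at hmem
  exact hn (by rw [pow_eq_zero_of_le hmem ha, smul_zero])

lemma eval_one_mul_C (p : Polynomial E) (b : E) : (p * C b).eval 1 = p.eval 1 * b := by
  induction p using Polynomial.induction_on' with
  | add p q hp hq => rw [add_mul, eval_add, eval_add, hp, hq, add_mul]
  | monomial n a => rw [monomial_mul_C, eval_monomial, eval_monomial, one_pow, mul_one, mul_one]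

lemma eval_one_mul_X_pow (p : Polynomial E) (n : ℕ) : (p * X ^ n).eval 1 = p.eval 1 := by
  induction n with
  | zero => rw [pow_zero, mul_one]
  | succ n ih => rw [pow_succ, ← mul_assoc, eval_mul_X, ih, mul_one]

lemma eval_one_mul (p q : Polynomial E) : (p * q).eval 1 = p.eval 1 * q.eval 1 := by
  induction q using Polynomial.induction_on' with
  | add q r hq hr => rw [mul_add, eval_add, eval_add, hq, hr, mul_add]
  | monomial n b =>
    rw [← C_mul_X_pow_eq_monomial, ← mul_assoc, eval_one_mul_X_pow, eval_one_mul_C, C_mul_X_pow_eq_monomial,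
      eval_monomial, one_pow, mul_one]

lemma eval_one_pow (p : Polynomial E) (n : ℕ) : (p ^ n).eval 1 = (p.eval 1) ^ n := by
  induction n with
  | zero => simp
  | succ n ih => rw [pow_succ, eval_one_mul, ih, pow_succ]

lemma coeff_zero_pow (p : Polynomial E) (n : ℕ) : (p ^ n).coeff 0 = (p.coeff 0) ^ n := by
  induction n with
  | zero => simp
  | succ n ih => rw [pow_succ, mul_coeff_zero, ih, pow_succ]

lemma conj (x : E) (Y : ℕ → E) (K N : ℕ) (hK : 0 < K) (hN : 0 < N)
    (hx : x ^ N = 0)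
    (hYK : ∀ n, K ≤ n → Y n = 0)
    (hYrec : ∀ n, Y (n + 1) = x * Y n - Y n * x) :
    ep x N * (∑ k ∈ range K, monomial k (((-1 : ℚ) ^ k * ((k.factorial : ℚ))⁻¹) • Y k))
      = C (Y 0) * ep x N := by
  have hnx : (-x) ^ N = 0 := by rw [neg_pow, hx, mul_zero]
  obtain ⟨K', rfl⟩ : ∃ K', K = K' + 1 := ⟨K - 1, by omega⟩
  set Ψ : ℕ → Polynomial E := fun n =>
    ∑ k ∈ range (K' + 1), monomial k (((-1 : ℚ) ^ k * ((k.factorial : ℚ))⁻¹) • Y (n + k)) with hΨ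
  set Φ : ℕ → Polynomial E := fun n => ep (-x) N * C (Y n) * ep x N with hΦ
  have hdΦ : ∀ n, derivative (Φ n) = -Φ (n + 1) := by
    intro n
    simp only [hΦ, hYrec n]
    rw [derivative_mul, derivative_mul, derivative_C, mul_zero, add_zero,
      ep_derivative hnx, ep_derivative hx, C_comm_ep (Commute.refl (-x)) N]
    simp only [map_sub, map_mul, map_neg]
    noncomm_ring
  have hdΨ : ∀ n, derivative (Ψ n) = -Ψ (n + 1) := by
    intro n
    simp only [hΨ]
    rw [map_sum, Finset.sum_range_succ']
    have h0 : derivative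
        (monomial 0 (((-1 : ℚ) ^ 0 * ((Nat.factorial 0 : ℚ))⁻¹) • Y (n + 0)) : Polynomial E) = 0 := by
      rw [derivative_monomial]
      simp
    rw [h0, add_zero, Finset.sum_range_succ, hYK (n + 1 + K') (by omega), smul_zero,
      monomial_zero_right, add_zero, ← Finset.sum_neg_distrib]
    refine Finset.sum_congr rfl fun i _ => ?_
    rw [derivative_monomial, Nat.succ_sub_one, ← monomial_neg]
    push_cast
    rw [mul_natCast_succ_smul]
    have hidx : n + (i + 1) = n + 1 + i := by omega
    rw [hidx, ← neg_smul]
    congr 1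
    congr 1
    rw [Nat.factorial_succ]
    push_cast
    have h1 : (i.factorial : ℚ) ≠ 0 := by positivity
    field_simp
    ring
  have hΦ0 : ∀ n, (Φ n).coeff 0 = Y n := by
    intro n
    simp only [hΦ]
    rw [mul_coeff_zero, mul_coeff_zero, ep_coeff_zero _ hN, ep_coeff_zero _ hN, coeff_C_zero,
      one_mul, mul_one]
  have hΨ0 : ∀ n, (Ψ n).coeff 0 = Y n := by
    intro n
    simp only [hΨ]
    rw [finset_sum_coeff, Finset.sum_eq_single 0]
    · simp
    · intro b _ hb
      rw [coeff_monomial]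
      simp [hb]
    · intro hmem
      simp at hmem
  have key : ∀ m n, (Φ n).coeff m = (Ψ n).coeff m := by
    intro m
    induction m with
    | zero => intro n; rw [hΦ0, hΨ0]
    | succ m ih =>
      intro n
      apply cast_cancel m
      have h1 := congrArg (fun r => Polynomial.coeff r m) (hdΦ n)
      have h2 := congrArg (fun r => Polynomial.coeff r m) (hdΨ n)
      simp only [coeff_derivative, coeff_neg] at h1 h2
      rw [h1, h2, ih (n + 1)]
  have hΦΨ : ∀ n, Φ n = Ψ n := fun n => Polynomial.ext fun m => key m n
  have h0 : Ψ 0 = ∑ k ∈ range (K' + 1),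
      monomial k (((-1 : ℚ) ^ k * ((k.factorial : ℚ))⁻¹) • Y k) := by
    simp only [hΨ, zero_add]
  rw [← h0, ← hΦΨ 0]
  simp only [hΦ]
  rw [← mul_assoc, ← mul_assoc, ep_mul_neg hN hx, one_mul]

lemma main (x : E) (Y : ℕ → E) (K N : ℕ) (hK : 0 < K) (hN : 0 < N)
    (hYK : ∀ n, K ≤ n → Y n = 0)
    (hYrec : ∀ n, Y (n + 1) = x * Y n - Y n * x)
    (hYcomm : ∀ m n, Commute (Y m) (Y n))
    (hYnil : ∀ n, IsNilpotent (Y n))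
    (hx : x ^ N = 0) (hxY : (x + Y 0) ^ N = 0) :
    expE (x + Y 0) =
      expE x * expE (∑ k ∈ range K, ((-1 : ℚ) ^ k * (((k + 1).factorial : ℚ))⁻¹) • Y k) := by
  classical
  set U : Polynomial E :=
    ∑ k ∈ range K, monomial k (((-1 : ℚ) ^ k * ((k.factorial : ℚ))⁻¹) • Y k) with hU
  set Vt : Polynomial E :=
    ∑ k ∈ range K, monomial (k + 1) (((-1 : ℚ) ^ k * (((k + 1).factorial : ℚ))⁻¹) • Y k) with hVt
  have hconj : ep x N * U = C (Y 0) * ep x N := conj x Y K N hK hN hx hYK hYrec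
  have hdVt : derivative Vt = U := by
    rw [hVt, hU, map_sum]
    refine Finset.sum_congr rfl fun k _ => ?_
    rw [derivative_monomial, Nat.succ_sub_one]
    push_cast
    rw [mul_natCast_succ_smul]
    congr 1
    congr 1
    rw [Nat.factorial_succ]
    push_cast
    have h1 : (k.factorial : ℚ) ≠ 0 := by positivity
    field_simp
  have hVtU : Commute Vt U := by
    rw [hVt, hU]
    exact commute_sums_monomial _ _ _ _ _ _
      (fun a b => ((hYcomm a b).smul_left _).smul_right _)
  have hVtnil : IsNilpotent Vt := by
    rw [hVt]
    refine isNilpotent_sum' (fun k _ => ?_) (fun i _ j _ =>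
      commute_monomial (((hYcomm i j).smul_left _).smul_right _) _ _)
    obtain ⟨m, hm⟩ := hYnil k
    exact ⟨m, by rw [monomial_pow, _root_.smul_pow, hm, smul_zero, monomial_zero_right]⟩
  obtain ⟨M, hM⟩ := hVtnil
  set G : Polynomial E := ∑ n ∈ range (M + 1), (n.factorial : ℚ)⁻¹ • Vt ^ n with hG
  have hcVt : Vt * derivative Vt = derivative Vt * Vt := by
    rw [hdVt]
    exact hVtU.eq
  have hdG : derivative G = U * G := by
    have hRHS : U * G = ∑ i ∈ range M, (i.factorial : ℚ)⁻¹ • (U * Vt ^ i) := by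
      rw [hG, Finset.mul_sum]
      simp only [mul_smul_comm]
      rw [Finset.sum_range_succ, hM, mul_zero, smul_zero, add_zero]
    rw [hRHS, hG, map_sum]
    simp only [derivative_smul]
    rw [Finset.sum_range_succ']
    have h0 : (Nat.factorial 0 : ℚ)⁻¹ • derivative ((Vt : Polynomial E) ^ 0) = 0 := by
      rw [pow_zero, derivative_one, smul_zero]
    rw [h0, add_zero]
    refine Finset.sum_congr rfl fun i _ => ?_
    rw [derivative_pow_comm hcVt, hdVt, smul_smul]
    congr 1
    rw [Nat.factorial_succ]
    push_cast
    have h1 : (i.factorial : ℚ) ≠ 0 := by positivity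
    field_simp
  have hVt0 : Vt.coeff 0 = 0 := by
    rw [hVt, finset_sum_coeff]
    refine Finset.sum_eq_zero fun k _ => ?_
    rw [coeff_monomial]
    simp
  have hG0 : G.coeff 0 = 1 := by
    rw [hG, finset_sum_coeff]
    have hcongr : ∀ n ∈ range (M + 1),
        (((n.factorial : ℚ)⁻¹ • Vt ^ n).coeff 0) = if n = 0 then 1 else 0 := by
      intro n _
      rw [coeff_smul, coeff_zero_pow, hVt0]
      cases n with
      | zero => simp
      | succ n => simp
    rw [Finset.sum_congr rfl hcongr, Finset.sum_ite_eq' (range (M + 1)) 0 (fun _ => 1)]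
    simp
  have hF2 : derivative (ep x N * G) = C (x + Y 0) * (ep x N * G) := by
    rw [derivative_mul, ep_derivative hx, hdG, C_add, add_mul, mul_assoc,
      ← mul_assoc (ep x N), hconj, mul_assoc]
  have hF1 : derivative (ep (x + Y 0) N) = C (x + Y 0) * ep (x + Y 0) N := ep_derivative hxY
  have hcoeff : (ep (x + Y 0) N).coeff 0 = (ep x N * G).coeff 0 := by
    rw [ep_coeff_zero _ hN, mul_coeff_zero, ep_coeff_zero _ hN, hG0, one_mul]
  have hFeq : ep (x + Y 0) N = ep x N * G := ode_uniq hF1 hF2 hcoeff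
  have hepeval : ∀ a : E, a ^ N = 0 → (ep a N).eval 1 = expE a := by
    intro a ha
    rw [expE_eq_sum ha, ep, eval_finset_sum]
    refine Finset.sum_congr rfl fun n _ => ?_
    rw [eval_monomial, one_pow, mul_one]
  have hv : Vt.eval 1 = ∑ k ∈ range K, ((-1 : ℚ) ^ k * (((k + 1).factorial : ℚ))⁻¹) • Y k := by
    rw [hVt, eval_finset_sum]
    refine Finset.sum_congr rfl fun k _ => ?_
    rw [eval_monomial, one_pow, mul_one]
  have hvM1 : (Vt.eval 1) ^ (M + 1) = 0 := by
    rw [pow_succ', ← eval_one_pow, hM, eval_zero, mul_zero]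
  have hGeval : G.eval 1 = expE (Vt.eval 1) := by
    rw [expE_eq_sum hvM1, hG, eval_finset_sum]
    refine Finset.sum_congr rfl fun n _ => ?_
    rw [eval_smul, eval_one_pow]
  calc expE (x + Y 0) = (ep (x + Y 0) N).eval 1 := (hepeval _ hxY).symm
    _ = (ep x N * G).eval 1 := by rw [hFeq]
    _ = (ep x N).eval 1 * G.eval 1 := eval_one_mul _ _
    _ = expE x * expE (Vt.eval 1) := by rw [hepeval _ hx, hGeval]
    _ = _ := by rw [hv]

open PowerSeries in
lemma bernoulli'_conv (i : ℕ) :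
    (∑ p ∈ Finset.HasAntidiagonal.antidiagonal i,
      ((-1 : ℚ) ^ p.1 * (((p.1 + 1).factorial : ℚ))⁻¹) * (bernoulli' p.2 * ((p.2.factorial : ℚ))⁻¹))
      = if i = 0 then 1 else 0 := by
  classical
  set Gs : PowerSeries ℚ := PowerSeries.mk fun n => (-1 : ℚ) ^ n * (((n + 1).factorial : ℚ))⁻¹
    with hGs
  have hGX : Gs * PowerSeries.X = 1 - PowerSeries.evalNegHom (PowerSeries.exp ℚ) := by
    ext n
    cases n with
    | zero =>
      rw [coeff_zero_mul_X]
      show (0 : ℚ) = PowerSeries.coeff 0 (1 - evalNegHom (exp ℚ))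
      rw [map_sub, PowerSeries.coeff_one]
      show (0 : ℚ) = 1 - PowerSeries.coeff 0 (rescale (-1) (exp ℚ))
      rw [coeff_rescale, coeff_exp]
      norm_num
    | succ n =>
      rw [coeff_succ_mul_X, map_sub, PowerSeries.coeff_one]
      show (PowerSeries.coeff n) Gs = _ - PowerSeries.coeff (n+1) (rescale (-1) (exp ℚ))
      rw [coeff_rescale, coeff_exp, hGs, coeff_mk]
      have h1 : ((n + 1).factorial : ℚ) ≠ 0 := by positivity
      rw [if_neg (Nat.succ_ne_zero n)]
      simp only [eq_ratCast, Rat.cast_eq_id, id_eq, map_div₀, map_one, map_natCast]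
      rw [pow_succ]
      field_simp
      ring
  have hE := bernoulli'PowerSeries_mul_exp_sub_one ℚ
  have hEneg : exp ℚ * evalNegHom (exp ℚ) = 1 := PowerSeries.exp_mul_exp_neg_eq_one
  have hXE : (PowerSeries.X * PowerSeries.exp ℚ : PowerSeries ℚ) ≠ 0 := by
    intro hc
    have h2 := congrArg (PowerSeries.coeff 1) hc
    rw [PowerSeries.coeff_mul] at h2
    simp [PowerSeries.coeff_X, PowerSeries.coeff_exp, Finset.HasAntidiagonal.antidiagonal] at h2
  have key : Gs * bernoulli'PowerSeries ℚ = 1 := by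
    apply mul_right_cancel₀ hXE
    calc Gs * bernoulli'PowerSeries ℚ * (PowerSeries.X * exp ℚ)
        = bernoulli'PowerSeries ℚ * ((Gs * PowerSeries.X) * exp ℚ) := by ring
      _ = bernoulli'PowerSeries ℚ * ((1 - evalNegHom (exp ℚ)) * exp ℚ) := by rw [hGX]
      _ = bernoulli'PowerSeries ℚ * (exp ℚ - 1) := by
          rw [sub_mul, one_mul, mul_comm (evalNegHom (exp ℚ)), hEneg]
      _ = PowerSeries.X * exp ℚ := hE
      _ = 1 * (PowerSeries.X * exp ℚ) := (one_mul _).symm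
  have hcoe := congrArg (PowerSeries.coeff i) key
  rw [PowerSeries.coeff_mul, PowerSeries.coeff_one] at hcoe
  rw [← hcoe]
  refine Finset.sum_congr rfl fun p _ => ?_
  rw [hGs, coeff_mk, bernoulli'PowerSeries, coeff_mk]
  simp [div_eq_mul_inv]

lemma conv_sum {V : Type} [AddCommGroup V] [Module ℚ V] (A : ℕ → V) (g f : ℕ → ℚ) (K : ℕ)
    (hA : ∀ i, K ≤ i → A i = 0) :
    ∑ k ∈ range K, ∑ m ∈ range K, (g k * f m) • A (k + m)
      = ∑ i ∈ range K, (∑ p ∈ Finset.HasAntidiagonal.antidiagonal i, g p.1 * f p.2) • A i := by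
  classical
  have hRHS : ∀ i ∈ range K, (∑ p ∈ Finset.HasAntidiagonal.antidiagonal i, g p.1 * f p.2) • A i
      = ∑ p ∈ Finset.HasAntidiagonal.antidiagonal i, (g p.1 * f p.2) • A (p.1 + p.2) := by
    intro i _
    rw [Finset.sum_smul]
    refine Finset.sum_congr rfl fun p hp => ?_
    rw [Finset.HasAntidiagonal.mem_antidiagonal] at hp
    rw [hp]
  rw [Finset.sum_congr rfl hRHS]
  have hLHS : ∑ k ∈ range K, ∑ m ∈ range K, (g k * f m) • A (k + m)
      = ∑ p ∈ range K ×ˢ range K, (g p.1 * f p.2) • A (p.1 + p.2) := by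
    rw [Finset.sum_product]
  rw [hLHS]
  have hdisj : (↑(range K) : Set ℕ).PairwiseDisjoint (fun i => Finset.HasAntidiagonal.antidiagonal i) := by
    intro i _ j _ hij
    refine Finset.disjoint_left.2 fun p hpi hpj => ?_
    rw [Finset.HasAntidiagonal.mem_antidiagonal] at hpi hpj
    exact hij (hpi.symm.trans hpj)
  rw [← Finset.sum_biUnion hdisj]
  refine (Finset.sum_subset ?_ ?_).symm
  · intro p hp
    simp only [Finset.mem_biUnion, Finset.mem_range] at hp
    obtain ⟨i, hi, hpi⟩ := hp
    rw [Finset.HasAntidiagonal.mem_antidiagonal] at hpi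
    simp only [Finset.mem_product, Finset.mem_range]
    omega
  · intro p _ hnp
    have hge : K ≤ p.1 + p.2 := by
      by_contra hlt
      push_neg at hlt
      exact hnp (Finset.mem_biUnion.2
        ⟨p.1 + p.2, Finset.mem_range.2 hlt, Finset.HasAntidiagonal.mem_antidiagonal.2 rfl⟩)
    rw [hA _ hge, smul_zero]

end BCHAux

lemma CurvedLS.ad_eq (L : CurvedLS) (u : L.V) : L.ad u = L.br u := rfl


/-- if `y, z` are odd elements of `L⁻¹` with `ad z (ad y)ⁿ z = 0`
for all `n ≥ 0`, then `y + (ad y/(1 − e^{−ad y})) z` solves the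
Baker–Campbell–Hausdorff equation `e^{ad(y ∗ z)} = e^{ad y} e^{ad z}`, i.e.
`y ∗ z = y + (ad y/(1 − e^{−ad y})) z`. -/
theorem statement3 (L : CurvedLS) (hnil : L.NilpotentCLS) (y z : L.V)
    (hy : y ∈ L.comp (-1) 1) (hz : z ∈ L.comp (-1) 1)
    (h : ∀ n : ℕ, L.ad z (((L.ad y) ^ n) z) = 0) :
    L.expAd (y + L.toddOp y z) = L.expAd y * L.expAd z := by
  classical
  show BCHAux.expE (L.ad (y + L.toddOp y z)) = BCHAux.expE (L.ad y) * BCHAux.expE (L.ad z)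
  simp only [CurvedLS.ad_eq] at h ⊢
  set x : Module.End ℚ L.V := L.br y with hx_def
  have hyP : y ∈ L.P 1 := (le_iSup (fun k => L.comp k 1) (-1 : ℤ)) hy
  have hzP : z ∈ L.P 1 := (le_iSup (fun k => L.comp k 1) (-1 : ℤ)) hz
  have hstep : ∀ n : ℕ, (x ^ (n + 1)) z = L.br y ((x ^ n) z) := by
    intro n
    rw [pow_succ', Module.End.mul_apply]
  have hZn_mem : ∀ n : ℕ, (x ^ n) z ∈ L.comp (-1) 1 := by
    intro n
    induction n with
    | zero => simpa using hz
    | succ n ih =>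
      have hb := L.br_mem (-1) (-1) 1 1 y ((x ^ n) z) hy ih
      have h1 : ((-1 : ℤ) + (-1) + 1) = -1 := by norm_num
      have h2 : ((1 : ZMod 2) + 1 + 1) = 1 := by decide
      rw [h1, h2] at hb
      rw [hstep n]
      exact hb
  have hZnP : ∀ n, (x ^ n) z ∈ L.P 1 :=
    fun n => (le_iSup (fun k => L.comp k 1) (-1 : ℤ)) (hZn_mem n)
  have had0 : L.br (0 : L.V) = 0 := map_zero L.br
  -- the adjoint of an odd element acts as a derivation of the bracket
  have hadbr : ∀ u v : L.V, u ∈ L.P 1 →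
      L.br (L.br u v) = L.br u * L.br v - L.br v * L.br u := by
    intro u v huP
    have hsgn : sgn (1 : ZMod 2) = -1 := by rw [sgn, if_neg (by decide)]
    ext w
    have hj := L.jacobi 1 u v w huP
    rw [hsgn, neg_neg, one_smul] at hj
    simp only [LinearMap.sub_apply, Module.End.mul_apply]
    rw [hj]
    abel
  -- brackets within the ad-orbit of z vanish
  have hbrZZ : ∀ m n, L.br ((x ^ m) z) ((x ^ n) z) = 0 := by
    intro m
    induction m with
    | zero =>
      intro n
      simpa using h n
    | succ m ih =>
      intro n
      have hj := congrArg (fun F : Module.End ℚ L.V => F ((x ^ n) z))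
        (hadbr y ((x ^ m) z) hyP)
      simp only [LinearMap.sub_apply, Module.End.mul_apply] at hj
      rw [← hx_def] at hj
      rw [← hstep n, ih n, ih (n + 1), map_zero] at hj
      rw [hstep m, hj, sub_zero]
  have hadcomm : ∀ m n, Commute (L.br ((x ^ m) z)) (L.br ((x ^ n) z)) := by
    intro m n
    have h0 := hadbr ((x ^ m) z) ((x ^ n) z) (hZnP m)
    rw [hbrZZ m n, had0] at h0
    exact sub_eq_zero.mp h0.symm
  -- nilpotency bounds
  obtain ⟨n1, hn1⟩ := hnil y hyP
  have hn1' : x ^ n1 = 0 := hn1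
  set N₀ := n1 + 1 with hN₀def
  have hN₀pos : 0 < N₀ := Nat.succ_pos n1
  have hxN₀ : x ^ N₀ = 0 := BCHAux.pow_eq_zero_of_le (Nat.le_succ n1) hn1'
  have hZn0 : ∀ n, N₀ ≤ n → (x ^ n) z = 0 := by
    intro n hn
    rw [BCHAux.pow_eq_zero_of_le hn hxN₀]
    rfl
  have hadZn0 : ∀ n, N₀ ≤ n → L.br ((x ^ n) z) = 0 := by
    intro n hn
    rw [hZn0 n hn, had0]
  -- the element w = toddOp y z
  have hsupp : (Function.support fun n : ℕ =>
      bernoulli' n • ((n.factorial : ℚ)⁻¹ • (L.ad y) ^ n)) ⊆ ↑(Finset.range N₀) := by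
    intro n hn
    simp only [Function.mem_support] at hn
    by_contra hmem
    simp only [Finset.coe_range, Set.mem_Iio, not_lt] at hmem
    apply hn
    have hxn : (L.ad y) ^ n = 0 := BCHAux.pow_eq_zero_of_le hmem hxN₀
    rw [hxn, smul_zero, smul_zero]
  have hop : L.toddOp y = ∑ m ∈ Finset.range N₀, bernoulli' m • ((m.factorial : ℚ)⁻¹ • x ^ m) := by
    rw [CurvedLS.toddOp, finsum_eq_sum_of_support_subset _ hsupp]
    simp only [CurvedLS.ad_eq, ← hx_def]
  have hwv : L.toddOp y z = ∑ m ∈ Finset.range N₀,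
      bernoulli' m • ((m.factorial : ℚ)⁻¹ • ((x ^ m) z)) := by
    rw [hop, LinearMap.sum_apply]
    refine Finset.sum_congr rfl fun m _ => ?_
    rw [LinearMap.smul_apply, LinearMap.smul_apply]
  have hw_mem : L.toddOp y z ∈ L.comp (-1) 1 := by
    rw [hwv]
    exact Submodule.sum_mem _ fun m _ =>
      Submodule.smul_mem _ _ (Submodule.smul_mem _ _ (hZn_mem m))
  have hywP : y + L.toddOp y z ∈ L.P 1 :=
    Submodule.add_mem _ hyP ((le_iSup (fun k => L.comp k 1) (-1 : ℤ)) hw_mem)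
  -- the sequence Y n = (ad x)^n (ad w)
  set Y : ℕ → Module.End ℚ L.V := fun n =>
    ∑ m ∈ Finset.range N₀, (bernoulli' m * (m.factorial : ℚ)⁻¹) • L.br ((x ^ (m + n)) z) with hYdef
  have hY0 : L.br (y + L.toddOp y z) = x + Y 0 := by
    rw [map_add, ← hx_def]
    congr 1
    rw [hwv, map_sum]
    simp only [hYdef]
    refine Finset.sum_congr rfl fun m _ => ?_
    rw [map_smul, map_smul, smul_smul]
    rfl
  have hYK : ∀ n, N₀ ≤ n → Y n = 0 := by
    intro n hn
    simp only [hYdef]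
    refine Finset.sum_eq_zero fun m _ => ?_
    rw [hadZn0 (m + n) (by omega), smul_zero]
  have hYrec : ∀ n, Y (n + 1) = x * Y n - Y n * x := by
    intro n
    simp only [hYdef]
    rw [Finset.mul_sum, Finset.sum_mul, ← Finset.sum_sub_distrib]
    refine Finset.sum_congr rfl fun m _ => ?_
    have hidx : (x ^ (m + (n + 1))) z = L.br y ((x ^ (m + n)) z) := hstep (m + n)
    rw [hidx, hadbr y ((x ^ (m + n)) z) hyP, ← hx_def]
    rw [smul_sub, mul_smul_comm, smul_mul_assoc]
  have hYcomm : ∀ m n, Commute (Y m) (Y n) := by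
    intro m n
    simp only [hYdef]
    refine Commute.sum_left _ _ _ fun i _ => Commute.sum_right _ _ _ fun j _ => ?_
    exact ((hadcomm (i + m) (j + n)).smul_left _).smul_right _
  have hYnil : ∀ n, IsNilpotent (Y n) := by
    intro n
    simp only [hYdef]
    refine BCHAux.isNilpotent_sum' (fun m _ => ?_) (fun i _ j _ =>
      ((hadcomm (i + n) (j + n)).smul_left _).smul_right _)
    obtain ⟨r, hr⟩ := hnil ((x ^ (m + n)) z) (hZnP (m + n))
    exact ⟨r, by rw [_root_.smul_pow]; rw [(by rfl : L.ad ((x ^ (m + n)) z) = L.br ((x ^ (m + n)) z))] at hr; rw [hr, smul_zero]⟩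
  -- global nilpotency bound
  obtain ⟨n2, hn2⟩ := hnil (y + L.toddOp y z) hywP
  have hn2' : (x + Y 0) ^ n2 = 0 := by
    rw [← hY0]
    exact hn2
  have hNpos : 0 < N₀ + n2 + 1 := by omega
  have hxN : x ^ (N₀ + n2 + 1) = 0 := BCHAux.pow_eq_zero_of_le (m := N₀) (by omega) hxN₀
  have hxYN : (x + Y 0) ^ (N₀ + n2 + 1) = 0 := BCHAux.pow_eq_zero_of_le (m := n2) (by omega) hn2'
  -- apply the abstract BCH lemma
  have hmain := BCHAux.main x Y N₀ (N₀ + n2 + 1) hN₀pos hNpos hYK hYrec hYcomm hYnil hxN hxYN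
  rw [hY0, hmain]
  congr 1
  -- identify the remaining exponent with ad z
  have hv : ∑ k ∈ Finset.range N₀, ((-1 : ℚ) ^ k * (((k + 1).factorial : ℚ))⁻¹) • Y k
      = L.br z := by
    have hexp : ∀ k ∈ Finset.range N₀,
        ((-1 : ℚ) ^ k * (((k + 1).factorial : ℚ))⁻¹) • Y k
        = ∑ m ∈ Finset.range N₀,
            (((-1 : ℚ) ^ k * (((k + 1).factorial : ℚ))⁻¹) * (bernoulli' m * (m.factorial : ℚ)⁻¹))
              • L.br ((x ^ (k + m)) z) := by
      intro k _
      simp only [hYdef]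
      rw [Finset.smul_sum]
      refine Finset.sum_congr rfl fun m _ => ?_
      rw [smul_smul, Nat.add_comm m k]
    rw [Finset.sum_congr rfl hexp]
    rw [BCHAux.conv_sum (fun i => L.br ((x ^ i) z)) _ _ N₀ (fun i hi => hadZn0 i hi)]
    have hconv : ∀ i ∈ Finset.range N₀,
        (∑ p ∈ Finset.HasAntidiagonal.antidiagonal i,
          ((-1 : ℚ) ^ p.1 * (((p.1 + 1).factorial : ℚ))⁻¹) * (bernoulli' p.2 * ((p.2.factorial : ℚ))⁻¹))
          • L.br ((x ^ i) z)
        = if i = 0 then L.br ((x ^ i) z) else 0 := by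
      intro i _
      rw [BCHAux.bernoulli'_conv i]
      split_ifs with hi
      · rw [one_smul]
      · rw [zero_smul]
    rw [Finset.sum_congr rfl hconv, Finset.sum_ite_eq' (Finset.range N₀) 0
      (fun i => L.br ((x ^ i) z))]
    rw [if_pos (Finset.mem_range.2 hN₀pos)]
    rw [pow_zero, Module.End.one_apply]
  rw [hv]
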